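/- arXiv:2207.07406 — 2 statements merged into one kernel-verified Lean document; each statement's English description precedes it below -/
import Mathlib

section
/- Let N_φ, N_ψ ∈ ℂ, φₙ(x) = (N_φ/(2ⁿ √(n!))) Hₙ(sinh x) e^{−cosh²x}, ψₙ(x) = (2N_ψ/√(n!)) Hₙ(sinh x) cosh x. For h : ℝ → ℂ set h_{[−]}(s) = h(arsinh s) e^{s²/2}, h_{[+]}(s) = h(arsinh s) e^{−s²/2}/√(1+s²), and E_c = { h ∈ L²(ℝ) : h_{[−]} ∈ L²(ℝ) }. For z ∈ ℂ and g ∈ E_c define F_Φ(z)[g] = e^{−|z|²/2} Σ_{n≥0} (z̄ⁿ/√(n!)) ∫_ℝ conj(φₙ) g dx and F_Ψ(z)[g] = e^{−|z|²/2} Σ_{n≥0} (z̄ⁿ/√(n!)) ∫_ℝ conj(ψₙ) g dx. If (g_k) is a sequence in E_c and g ∈ E_c are such that ‖g_k − g‖₂ → 0 and ‖(g_k)_{[−]} − g_{[−]}‖₂ → 0, then for every z ∈ ℂ one has F_Φ(z)[g_k] → F_Φ(z)[g] and F_Ψ(z)[g_k] → F_Ψ(z)[g]; moreover ‖(g_k)_{[+]}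 − g_{[+]}‖₂ ≤ ‖(g_k)_{[−]} − g_{[−]}‖₂ → 0. -/
open MeasureTheory Filter

/-- The physicist's Hermite polynomials:
`H₀(y) = 1`, `Hₙ(y) = 2y H_{n−1}(y) − H_{n−1}′(y)`. -/
noncomputable def hermiteH : ℕ → ℝ → ℝ
  | 0 => fun _ => 1
  | n + 1 => fun y => 2 * y * hermiteH n y - deriv (hermiteH n) y

/-- `h_{[−]}(s) = h(arsinh s) e^{s²/2}`. -/
noncomputable def minusT (h : ℝ → ℂ) : ℝ → ℂ :=
  fun s => h (Real.arsinh s) * (Real.exp (s ^ 2 / 2) : ℂ)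

/-- `h_{[+]}(s) = h(arsinh s) e^{−s²/2}/√(1+s²)`. -/
noncomputable def plusT (h : ℝ → ℂ) : ℝ → ℂ :=
  fun s => h (Real.arsinh s) * (Real.exp (-s ^ 2 / 2) : ℂ) / (Real.sqrt (1 + s ^ 2) : ℂ)

/-- `E_c = { h ∈ L² : h_{[−]} ∈ L² }`. -/
def Ec : Set (ℝ → ℂ) :=
  {h | MemLp h 2 (volume : Measure ℝ) ∧ MemLp (minusT h) 2 (volume : Measure ℝ)}

namespace Stmt16Aux

open Finset Polynomial

/-! ### Hermite polynomial bounds -/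

noncomputable def hPoly : ℕ → Polynomial ℝ
  | 0 => 1
  | n + 1 => 2 * Polynomial.X * hPoly n - Polynomial.derivative (hPoly n)

lemma hermiteH_eq (n : ℕ) : hermiteH n = fun y => (hPoly n).eval y := by
  induction n with
  | zero => funext y; simp [hermiteH, hPoly]
  | succ n ih =>
    funext y
    show 2 * y * hermiteH n y - deriv (hermiteH n) y = _
    rw [ih]
    simp only [hPoly, Polynomial.deriv, Polynomial.eval_sub, Polynomial.eval_mul,
      Polynomial.eval_ofNat, Polynomial.eval_X]

lemma hermiteH_continuous (n : ℕ) : Continuous (hermiteH n) := by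
  rw [hermiteH_eq]; exact (hPoly n).continuous

lemma two_poly : (2 : Polynomial ℝ) = Polynomial.C 2 := (map_ofNat Polynomial.C 2).symm

lemma hPoly_natDegree_le (n : ℕ) : (hPoly n).natDegree ≤ n := by
  induction n with
  | zero => simp [hPoly]
  | succ n ih =>
    rw [hPoly]
    refine (Polynomial.natDegree_sub_le _ _).trans ?_
    refine max_le ((Polynomial.natDegree_mul_le).trans ?_)
      ((Polynomial.natDegree_derivative_le _).trans (by omega))
    have : (2 * Polynomial.X : Polynomial ℝ).natDegree ≤ 1 :=
      (Polynomial.natDegree_mul_le).trans (by simp)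
    omega

lemma hPoly_coeff_eq_zero {n k : ℕ} (h : n < k) : (hPoly n).coeff k = 0 :=
  Polynomial.coeff_eq_zero_of_natDegree_lt (lt_of_le_of_lt (hPoly_natDegree_le n) h)

lemma hPoly_coeff_zero (n : ℕ) :
    (hPoly (n+1)).coeff 0 = -((hPoly n).coeff 1) := by
  rw [hPoly, coeff_sub, two_poly, mul_assoc, coeff_C_mul, coeff_X_mul_zero, coeff_derivative]
  push_cast; ring

lemma hPoly_coeff_succ (n k : ℕ) :
    (hPoly (n+1)).coeff (k+1)
      = 2 * (hPoly n).coeff k - (hPoly n).coeff (k+2) * (k+2) := by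
  rw [hPoly, coeff_sub, two_poly, mul_assoc, coeff_C_mul, coeff_X_mul, coeff_derivative]
  push_cast; ring

noncomputable def wgt (k : ℕ) : ℝ := Real.sqrt 2 ^ k * Real.sqrt (k.factorial)

lemma wgt_nonneg (k : ℕ) : 0 ≤ wgt k := by unfold wgt; positivity

lemma wgt_zero : wgt 0 = 1 := by unfold wgt; simp

lemma wgt_succ (k : ℕ) : wgt (k+1) = Real.sqrt 2 * Real.sqrt ((k:ℝ)+1) * wgt k := by
  unfold wgt
  rw [Nat.factorial_succ, Nat.cast_mul, Real.sqrt_mul (by positivity), pow_succ]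
  push_cast
  ring

lemma sqrtPow (a : ℝ) (ha : 0 ≤ a) (k : ℕ) : Real.sqrt (a ^ k) = Real.sqrt a ^ k := by
  induction k with
  | zero => simp
  | succ k ih => rw [pow_succ, pow_succ, Real.sqrt_mul (pow_nonneg ha _), ih]

lemma pow_le_w (y : ℝ) (k : ℕ) :
    |y| ^ k ≤ wgt k * Real.exp (y ^ 2 / 4) := by
  have h0 : (y ^ 2 / 2) ^ k / (k.factorial : ℝ) ≤ Real.exp (y ^ 2 / 2) := by
    calc (y ^ 2 / 2) ^ k / (k.factorial : ℝ)
        ≤ ∑ i ∈ range (k + 1), (y ^ 2 / 2) ^ i / (i.factorial : ℝ) :=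
          Finset.single_le_sum (f := fun i => (y ^ 2 / 2) ^ i / (i.factorial : ℝ))
            (fun i _ => by positivity) (self_mem_range_succ k)
      _ ≤ Real.exp (y ^ 2 / 2) := Real.sum_le_exp_of_nonneg (by positivity) _
  have h1 : (y ^ 2) ^ k ≤ 2 ^ k * (k.factorial : ℝ) * Real.exp (y ^ 2 / 2) := by
    have hk : (0:ℝ) < (k.factorial : ℝ) := by positivity
    have := (div_le_iff₀ hk).mp h0
    calc (y ^ 2) ^ k = (y ^ 2 / 2) ^ k * 2 ^ k := by
          rw [div_pow]; field_simp
      _ ≤ (Real.exp (y ^ 2 / 2) * (k.factorial : ℝ)) * 2 ^ k := by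
          apply mul_le_mul_of_nonneg_right this (by positivity)
      _ = 2 ^ k * (k.factorial : ℝ) * Real.exp (y ^ 2 / 2) := by ring
  have h2 : |y| ^ k = Real.sqrt ((y ^ 2) ^ k) := by
    rw [sqrtPow _ (sq_nonneg y), Real.sqrt_sq_eq_abs]
  rw [h2]
  unfold wgt
  calc Real.sqrt ((y ^ 2) ^ k) ≤ Real.sqrt (2 ^ k * (k.factorial : ℝ) * Real.exp (y ^ 2 / 2)) :=
        Real.sqrt_le_sqrt h1
    _ = Real.sqrt 2 ^ k * Real.sqrt (k.factorial) * Real.exp (y ^ 2 / 4) := by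
        rw [Real.sqrt_mul (by positivity), Real.sqrt_mul (by positivity),
          sqrtPow _ (by norm_num), ← Real.exp_half]
        ring_nf

noncomputable def Bco (n : ℕ) : ℝ := ∑ k ∈ range (n+1), |(hPoly n).coeff k| * wgt k

lemma Bco_nonneg (n : ℕ) : 0 ≤ Bco n :=
  Finset.sum_nonneg fun k _ => mul_nonneg (abs_nonneg _) (wgt_nonneg k)

lemma Bco_succ_le (n : ℕ) : Bco (n+1) ≤ 6 * Real.sqrt ((n:ℝ)+1) * Bco n := by
  set p := hPoly n with hp
  have hsn : (1:ℝ) ≤ Real.sqrt ((n:ℝ)+1) := by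
    exact Real.one_le_sqrt.mpr (by push_cast; linarith)
  have hsn0 : (0:ℝ) ≤ Real.sqrt ((n:ℝ)+1) := by linarith
  have hB0 := Bco_nonneg n
  -- split off k = 0
  have key0 : Bco (n+1) = (∑ k ∈ range (n+1), |(hPoly (n+1)).coeff (k+1)| * wgt (k+1))
      + |p.coeff 1| := by
    unfold Bco
    rw [Finset.sum_range_succ' (fun k => |(hPoly (n+1)).coeff k| * wgt k) (n+1)]
    rw [hPoly_coeff_zero, wgt_zero, abs_neg, mul_one]
  -- termwise triangle inequality
  have step1 : ∑ k ∈ range (n+1), |(hPoly (n+1)).coeff (k+1)| * wgt (k+1)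
      ≤ ∑ k ∈ range (n+1), (2 * |p.coeff k| * wgt (k+1)
          + (((k:ℝ)+2) * |p.coeff (k+2)|) * wgt (k+1)) := by
    refine Finset.sum_le_sum fun k _ => ?_
    have habs : |(hPoly (n+1)).coeff (k+1)| ≤ 2 * |p.coeff k| + ((k:ℝ)+2) * |p.coeff (k+2)| := by
      rw [hPoly_coeff_succ]
      refine (abs_sub _ _).trans ?_
      rw [abs_mul, abs_mul]
      have : |(2:ℝ)| = 2 := by norm_num
      rw [this]
      have : |((k:ℝ)+2)| = (k:ℝ)+2 := abs_of_pos (by positivity)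
      rw [this]
      ring_nf
      linarith
    calc |(hPoly (n+1)).coeff (k+1)| * wgt (k+1)
        ≤ (2 * |p.coeff k| + ((k:ℝ)+2) * |p.coeff (k+2)|) * wgt (k+1) :=
          mul_le_mul_of_nonneg_right habs (wgt_nonneg _)
      _ = 2 * |p.coeff k| * wgt (k+1) + (((k:ℝ)+2) * |p.coeff (k+2)|) * wgt (k+1) := by ring
  have S1 : ∑ k ∈ range (n+1), 2 * |p.coeff k| * wgt (k+1)
      ≤ 2 * Real.sqrt 2 * Real.sqrt ((n:ℝ)+1) * Bco n := by
    have hterm : ∀ k ∈ range (n+1), 2 * |p.coeff k| * wgt (k+1)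
        ≤ 2 * Real.sqrt 2 * Real.sqrt ((n:ℝ)+1) * (|p.coeff k| * wgt k) := by
      intro k hk
      rw [wgt_succ]
      have hkr : (k:ℝ) ≤ n := by exact_mod_cast Nat.lt_succ_iff.mp (mem_range.mp hk)
      have hkn : Real.sqrt ((k:ℝ)+1) ≤ Real.sqrt ((n:ℝ)+1) := Real.sqrt_le_sqrt (by linarith)
      nlinarith [abs_nonneg (p.coeff k), wgt_nonneg k, Real.sqrt_nonneg 2,
        Real.sqrt_nonneg ((k:ℝ)+1),
        mul_nonneg (mul_nonneg (abs_nonneg (p.coeff k)) (wgt_nonneg k)) (Real.sqrt_nonneg 2)]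
    calc ∑ k ∈ range (n+1), 2 * |p.coeff k| * wgt (k+1)
        ≤ ∑ k ∈ range (n+1), 2 * Real.sqrt 2 * Real.sqrt ((n:ℝ)+1) * (|p.coeff k| * wgt k) :=
          Finset.sum_le_sum hterm
      _ = 2 * Real.sqrt 2 * Real.sqrt ((n:ℝ)+1) * Bco n := by
          rw [← Finset.mul_sum]; rfl
  have S2 : ∑ k ∈ range (n+1), (((k:ℝ)+2) * |p.coeff (k+2)|) * wgt (k+1)
      ≤ 2 * Real.sqrt ((n:ℝ)+1) * Bco n := by
    have hterm : ∀ k ∈ range (n+1), (((k:ℝ)+2) * |p.coeff (k+2)|) * wgt (k+1)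
        ≤ 2 * Real.sqrt ((n:ℝ)+1) * (|p.coeff (k+2)| * wgt (k+2)) := by
      intro k hk
      have hkr : (k:ℝ) ≤ n := by exact_mod_cast Nat.lt_succ_iff.mp (mem_range.mp hk)
      have h1 : wgt (k+2) = Real.sqrt 2 * Real.sqrt ((k:ℝ)+2) * wgt (k+1) := by
        rw [wgt_succ (k+1)]; norm_num
        left; norm_num [show ((k:ℝ)+1+1) = (k:ℝ)+2 by ring]
      have h2 : Real.sqrt ((k:ℝ)+2) * Real.sqrt ((k:ℝ)+2) = (k:ℝ)+2 :=
        Real.mul_self_sqrt (by positivity)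
      have h3 : Real.sqrt ((k:ℝ)+2) ≤ 2 * Real.sqrt 2 * Real.sqrt ((n:ℝ)+1) := by
        calc Real.sqrt ((k:ℝ)+2) ≤ Real.sqrt (8 * ((n:ℝ)+1)) :=
              Real.sqrt_le_sqrt (by linarith)
          _ = Real.sqrt 8 * Real.sqrt ((n:ℝ)+1) := Real.sqrt_mul (by norm_num) _
          _ ≤ 2 * Real.sqrt 2 * Real.sqrt ((n:ℝ)+1) := by
              have h8 : Real.sqrt 8 = 2 * Real.sqrt 2 := by
                rw [show (8:ℝ) = 2^2 * 2 by norm_num, Real.sqrt_mul (by positivity),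
                  Real.sqrt_sq (by norm_num)]
              rw [h8]
      have hw := wgt_nonneg (k+1)
      have hsk := Real.sqrt_nonneg ((k:ℝ)+2)
      have habs := abs_nonneg (p.coeff (k+2))
      have hX : ((k:ℝ)+2) * wgt (k+1) ≤ 2 * Real.sqrt ((n:ℝ)+1) * wgt (k+2) := by
        rw [h1]
        nlinarith [mul_le_mul_of_nonneg_right (mul_le_mul_of_nonneg_right h3 hsk) hw,
          mul_nonneg hsk hw, h2]
      have := mul_le_mul_of_nonneg_left hX habs
      nlinarith [this]
    have hshift : ∑ k ∈ range (n+1), |p.coeff (k+2)| * wgt (k+2) ≤ Bco n := by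
      set f : ℕ → ℝ := fun j => |p.coeff j| * wgt j with hf
      have hfnn : ∀ j, 0 ≤ f j := fun j => mul_nonneg (abs_nonneg _) (wgt_nonneg _)
      have hfz : ∀ j, n < j → f j = 0 := by
        intro j hj; simp [hf, hPoly_coeff_eq_zero hj, hp]
      have h1 : ∑ j ∈ range (n+3), f j
          = ((∑ k ∈ range (n+1), f (k+2)) + f 1) + f 0 := by
        rw [Finset.sum_range_succ' f (n+2), Finset.sum_range_succ' (fun k => f (k+1)) (n+1)]
      have h2 : ∑ j ∈ range (n+3), f j = ∑ j ∈ range (n+1), f j := by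
        rw [Finset.sum_range_succ, Finset.sum_range_succ, hfz (n+1) (by omega),
          hfz (n+2) (by omega)]
        ring
      have : Bco n = ∑ j ∈ range (n+1), f j := rfl
      rw [this]
      nlinarith [hfnn 0, hfnn 1]
    calc ∑ k ∈ range (n+1), (((k:ℝ)+2) * |p.coeff (k+2)|) * wgt (k+1)
        ≤ ∑ k ∈ range (n+1), 2 * Real.sqrt ((n:ℝ)+1) * (|p.coeff (k+2)| * wgt (k+2)) :=
          Finset.sum_le_sum hterm
      _ = 2 * Real.sqrt ((n:ℝ)+1) * ∑ k ∈ range (n+1), |p.coeff (k+2)| * wgt (k+2) := by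
          rw [← Finset.mul_sum]
      _ ≤ 2 * Real.sqrt ((n:ℝ)+1) * Bco n := by
          apply mul_le_mul_of_nonneg_left hshift (by positivity)
  have S4 : |p.coeff 1| ≤ Bco n := by
    match n, hp with
    | 0, hp =>
      have : p.coeff 1 = 0 := by rw [hp]; exact hPoly_coeff_eq_zero (by omega)
      rw [this]; simpa using Bco_nonneg 0
    | (m+1), hp =>
      have hw1 : (1:ℝ) ≤ wgt 1 := by
        rw [wgt_succ 0, wgt_zero]
        simp
      have hmem : |(hPoly (m+1)).coeff 1| * wgt 1 ≤ Bco (m+1) := by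
        unfold Bco
        exact Finset.single_le_sum (f := fun k => |(hPoly (m+1)).coeff k| * wgt k)
          (fun k _ => mul_nonneg (abs_nonneg _) (wgt_nonneg _)) (mem_range.mpr (by omega))
      rw [hp]
      exact (le_mul_of_one_le_right (abs_nonneg _) hw1).trans hmem
  have hs2 : Real.sqrt 2 ≤ (3:ℝ)/2 := by
    nlinarith [Real.sq_sqrt (by norm_num : (0:ℝ) ≤ 2), Real.sqrt_nonneg 2]
  have step2 : ∑ k ∈ range (n+1), (2 * |p.coeff k| * wgt (k+1)
      + (((k:ℝ)+2) * |p.coeff (k+2)|) * wgt (k+1))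
      = (∑ k ∈ range (n+1), 2 * |p.coeff k| * wgt (k+1))
        + ∑ k ∈ range (n+1), (((k:ℝ)+2) * |p.coeff (k+2)|) * wgt (k+1) :=
    Finset.sum_add_distrib
  rw [key0]
  have hchain := step1.trans (step2.le)
  nlinarith [hchain, S1, S2, S4,
    mul_le_mul_of_nonneg_right hs2 (mul_nonneg hsn0 hB0),
    mul_le_mul_of_nonneg_right hsn hB0]

lemma Bco_le (n : ℕ) : Bco n ≤ 6 ^ n * Real.sqrt (n.factorial) := by
  induction n with
  | zero => unfold Bco hPoly; simp [wgt_zero]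
  | succ n ih =>
    have h1 : Real.sqrt ((n+1).factorial : ℝ)
        = Real.sqrt ((n:ℝ)+1) * Real.sqrt (n.factorial) := by
      rw [Nat.factorial_succ, Nat.cast_mul, Real.sqrt_mul (by positivity)]
      push_cast; ring
    calc Bco (n+1) ≤ 6 * Real.sqrt ((n:ℝ)+1) * Bco n := Bco_succ_le n
      _ ≤ 6 * Real.sqrt ((n:ℝ)+1) * (6 ^ n * Real.sqrt (n.factorial)) := by
          apply mul_le_mul_of_nonneg_left ih (by positivity)
      _ = 6 ^ (n+1) * Real.sqrt ((n+1).factorial : ℝ) := by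
          rw [h1]; ring
    
lemma hermiteH_bound (n : ℕ) (y : ℝ) :
    |hermiteH n y| ≤ 6 ^ n * Real.sqrt (n.factorial) * Real.exp (y ^ 2 / 4) := by
  have heval : hermiteH n y = (hPoly n).eval y := by rw [hermiteH_eq]
  have hdeg : (hPoly n).natDegree < n + 1 := Nat.lt_succ_of_le (hPoly_natDegree_le n)
  have hsum : (hPoly n).eval y = ∑ k ∈ range (n+1), (hPoly n).coeff k * y ^ k :=
    (hPoly n).eval_eq_sum_range' hdeg y
  calc |hermiteH n y| ≤ ∑ k ∈ range (n+1), |(hPoly n).coeff k| * |y| ^ k := by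
        rw [heval, hsum]
        refine (Finset.abs_sum_le_sum_abs _ _).trans ?_
        refine Finset.sum_le_sum fun k _ => ?_
        rw [abs_mul, abs_pow]
    _ ≤ ∑ k ∈ range (n+1), |(hPoly n).coeff k| * (wgt k * Real.exp (y ^ 2 / 4)) := by
        refine Finset.sum_le_sum fun k _ => ?_
        exact mul_le_mul_of_nonneg_left (pow_le_w y k) (abs_nonneg _)
    _ = Bco n * Real.exp (y ^ 2 / 4) := by
        unfold Bco; rw [Finset.sum_mul]
        exact Finset.sum_congr rfl fun k _ => by ring
    _ ≤ 6 ^ n * Real.sqrt (n.factorial) * Real.exp (y ^ 2 / 4) :=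
        mul_le_mul_of_nonneg_right (Bco_le n) (Real.exp_nonneg _)


lemma sq_le_sinh_sq (x : ℝ) : x ^ 2 ≤ Real.sinh x ^ 2 := by
  rcases le_or_gt 0 x with h | h
  · have := Real.self_le_sinh_iff.mpr h
    nlinarith
  · have h2 : Real.sinh x ≤ x := Real.sinh_le_self_iff.mpr h.le
    nlinarith [Real.sinh_neg_iff.mpr h]

lemma memGauss {b : ℝ} (hb : 0 < b) :
    MemLp (fun x : ℝ => Real.exp (-b * x ^ 2)) 2 (volume : Measure ℝ) := by
  have hm : AEStronglyMeasurable (fun x : ℝ => Real.exp (-b * x ^ 2)) volume :=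
    (Real.continuous_exp.comp (by continuity)).aestronglyMeasurable
  rw [memLp_two_iff_integrable_sq hm]
  have : (fun x : ℝ => Real.exp (-b * x ^ 2) ^ 2) = fun x : ℝ => Real.exp (-(2*b) * x ^ 2) := by
    funext x
    rw [← Real.exp_nat_mul]
    ring_nf
  rw [this]
  exact integrable_exp_neg_mul_sq (by linarith)

-- Cauchy-Schwarz for the L² pairing
lemma cs_bound (f h : ℝ → ℂ) (hf : MemLp f 2 (volume : Measure ℝ))
    (hh : MemLp h 2 (volume : Measure ℝ)) :
    ‖∫ x : ℝ, (starRingEnd ℂ) (f x) * h x‖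
      ≤ (eLpNorm f 2 volume).toReal * (eLpNorm h 2 volume).toReal := by
  set F : Lp ℂ 2 (volume : Measure ℝ) := hf.toLp f
  set H : Lp ℂ 2 (volume : Measure ℝ) := hh.toLp h
  have h1 : (∫ x : ℝ, (starRingEnd ℂ) (f x) * h x) = @inner ℂ _ _ F H := by
    rw [MeasureTheory.L2.inner_def]
    refine (integral_congr_ae ?_).symm
    filter_upwards [hf.coeFn_toLp, hh.coeFn_toLp] with x hx1 hx2
    simp [F, H, hx1, hx2, RCLike.inner_apply]
    ring
  rw [h1]
  calc ‖@inner ℂ _ _ F H‖ ≤ ‖F‖ * ‖H‖ := norm_inner_le_norm F H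
    _ = (eLpNorm f 2 volume).toReal * (eLpNorm h 2 volume).toReal := by
        rw [MeasureTheory.Lp.norm_toLp, MeasureTheory.Lp.norm_toLp]

lemma integrable_conj_mul (f h : ℝ → ℂ) (hf : MemLp f 2 (volume : Measure ℝ))
    (hh : MemLp h 2 (volume : Measure ℝ)) :
    Integrable (fun x : ℝ => (starRingEnd ℂ) (f x) * h x) volume := by
  have := MeasureTheory.L2.integrable_inner (𝕜 := ℂ) (hf.toLp f) (hh.toLp h)
  refine this.congr ?_
  filter_upwards [hf.coeFn_toLp, hh.coeFn_toLp] with x hx1 hx2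
  simp [hx1, hx2, RCLike.inner_apply]
  ring

lemma summable_pow_div_sqrt_factorial {r : ℝ} (hr : 0 ≤ r) :
    Summable (fun n : ℕ => r ^ n / Real.sqrt (n.factorial)) := by
  have key : ∀ n : ℕ, r ^ n / Real.sqrt (n.factorial)
      ≤ ((2 * r ^ 2) ^ n / (n.factorial : ℝ) + (1/2) ^ n) / 2 := by
    intro n
    have hfac : (0:ℝ) < (n.factorial : ℝ) := by positivity
    have e1 : (2 * r ^ 2) ^ n / (n.factorial : ℝ) * (1/2) ^ n
        = (r ^ n) ^ 2 / (n.factorial : ℝ) := by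
      rw [div_mul_eq_mul_div, ← mul_pow,
        show 2 * r ^ 2 * (1/2) = r ^ 2 by ring, ← pow_mul, ← pow_mul, mul_comm 2 n]
    have h1 : r ^ n / Real.sqrt (n.factorial)
        = Real.sqrt ((2 * r ^ 2) ^ n / (n.factorial : ℝ) * (1/2) ^ n) := by
      rw [e1, Real.sqrt_div (sq_nonneg _), Real.sqrt_sq (pow_nonneg hr n)]
    rw [h1]
    set a := (2 * r ^ 2) ^ n / (n.factorial : ℝ) with ha
    set b := ((1:ℝ)/2) ^ n with hb
    have ha0 : 0 ≤ a := by positivity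
    have hb0 : 0 ≤ b := by positivity
    nlinarith [sq_nonneg (Real.sqrt a - Real.sqrt b), Real.sq_sqrt ha0, Real.sq_sqrt hb0,
      Real.sqrt_mul ha0 b, Real.sqrt_nonneg a, Real.sqrt_nonneg b, Real.sqrt_nonneg (a*b)]
  refine Summable.of_nonneg_of_le (fun n => by positivity) key ?_
  exact (((Real.summable_pow_div_factorial (2*r^2)).add
    (summable_geometric_of_lt_one (by norm_num) (by norm_num))).div_const 2)


lemma sinh_deriv_univ : ∀ x ∈ Set.univ,
    HasDerivWithinAt Real.sinh (Real.cosh x) Set.univ x :=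
  fun x _ => (Real.hasDerivAt_sinh x).hasDerivWithinAt

lemma sinh_image_univ : Real.sinh '' Set.univ = Set.univ := by
  rw [Set.image_univ]
  exact Real.sinh_surjective.range_eq

lemma cov (G : ℝ → ℂ) :
    ∫ x : ℝ, (Real.cosh x) • G (Real.sinh x) = ∫ s : ℝ, G s := by
  have := MeasureTheory.integral_image_eq_integral_abs_deriv_smul (f := Real.sinh)
    (f' := Real.cosh) MeasurableSet.univ sinh_deriv_univ
    (Real.sinh_injective.injOn) G
  rw [sinh_image_univ] at this
  simp only [Measure.restrict_univ] at this
  rw [this]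
  congr 1
  funext x
  rw [abs_of_pos (Real.cosh_pos x)]

lemma cov_integrable (G : ℝ → ℂ) :
    Integrable (fun x : ℝ => (Real.cosh x) • G (Real.sinh x)) volume
      ↔ Integrable G volume := by
  have := MeasureTheory.integrableOn_image_iff_integrableOn_abs_deriv_smul (f := Real.sinh)
    (f' := Real.cosh) MeasurableSet.univ sinh_deriv_univ (Real.sinh_injective.injOn) G
  rw [sinh_image_univ] at this
  simp only [IntegrableOn, Measure.restrict_univ] at this
  have heq : (fun x : ℝ => |Real.cosh x| • G (Real.sinh x))
      = fun x : ℝ => (Real.cosh x) • G (Real.sinh x) := by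
    funext x
    rw [abs_of_pos (Real.cosh_pos x)]
  rw [← heq, ← this]

lemma bound_package {f : ℝ → ℂ} (hm : AEStronglyMeasurable f (volume : Measure ℝ))
    {c b : ℝ} (hb : 0 < b) (hc : 0 ≤ c)
    (hpt : ∀ x, ‖f x‖ ≤ c * Real.exp (-b * x ^ 2)) :
    MemLp f 2 (volume : Measure ℝ) ∧ (eLpNorm f 2 volume).toReal
      ≤ c * (eLpNorm (fun x : ℝ => Real.exp (-b * x ^ 2)) 2 volume).toReal := by
  have hg := memGauss hb
  have hgc : MemLp (fun x : ℝ => c * Real.exp (-b * x ^ 2)) 2 (volume : Measure ℝ) :=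
    hg.const_mul c
  have hle : eLpNorm f 2 volume
      ≤ eLpNorm (fun x : ℝ => c * Real.exp (-b * x ^ 2)) 2 volume := by
    refine eLpNorm_mono_real fun x => (hpt x).trans ?_
    exact le_refl _
  refine ⟨⟨hm, lt_of_le_of_lt hle hgc.2⟩, ?_⟩
  have hsmul : (fun x : ℝ => c * Real.exp (-b * x ^ 2))
      = c • (fun x : ℝ => Real.exp (-b * x ^ 2)) := rfl
  have h2 : eLpNorm (fun x : ℝ => c * Real.exp (-b * x ^ 2)) 2 volume
      = (‖c‖₊ : ENNReal) * eLpNorm (fun x : ℝ => Real.exp (-b * x ^ 2)) 2 volume := by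
    rw [hsmul, eLpNorm_const_smul, enorm_eq_nnnorm]
  calc (eLpNorm f 2 volume).toReal
      ≤ (eLpNorm (fun x : ℝ => c * Real.exp (-b * x ^ 2)) 2 volume).toReal := by
        refine ENNReal.toReal_mono ?_ hle
        exact hgc.2.ne
    _ = c * (eLpNorm (fun x : ℝ => Real.exp (-b * x ^ 2)) 2 volume).toReal := by
        rw [h2, ENNReal.toReal_mul]
        congr 1
        simp [Real.nnnorm_of_nonneg hc]


lemma phi_pointwise (Nφ : ℂ) (n : ℕ) (x : ℝ) :
    ‖Nφ / ((2:ℂ)^n * (Real.sqrt n.factorial : ℂ)) * (hermiteH n (Real.sinh x) : ℂ)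
      * (Real.exp (-(Real.cosh x)^2) : ℂ)‖
      ≤ (‖Nφ‖ * 3 ^ n) * Real.exp (-(3/4) * x ^ 2) := by
  have hfac : (0:ℝ) < Real.sqrt n.factorial := Real.sqrt_pos.mpr (by positivity)
  have hnorm : ‖Nφ / ((2:ℂ)^n * (Real.sqrt n.factorial : ℂ)) * (hermiteH n (Real.sinh x) : ℂ)
      * (Real.exp (-(Real.cosh x)^2) : ℂ)‖
      = ‖Nφ‖ / (2^n * Real.sqrt n.factorial) * |hermiteH n (Real.sinh x)|
        * Real.exp (-(Real.cosh x)^2) := by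
    rw [norm_mul, norm_mul, norm_div, norm_mul, norm_pow]
    simp only [Complex.norm_real, Complex.norm_ofNat, Real.norm_eq_abs, Real.abs_exp,
      abs_of_pos hfac]
  rw [hnorm]
  have hH := hermiteH_bound n (Real.sinh x)
  have hexp : Real.exp (Real.sinh x ^ 2 / 4) * Real.exp (-(Real.cosh x)^2)
      ≤ Real.exp (-(3/4) * x ^ 2) := by
    rw [← Real.exp_add]
    apply Real.exp_le_exp.mpr
    have h1 := sq_le_sinh_sq x
    have h2 : Real.cosh x ^ 2 = Real.sinh x ^ 2 + 1 := Real.cosh_sq x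
    nlinarith
  have hstep : ‖Nφ‖ / (2^n * Real.sqrt n.factorial) * |hermiteH n (Real.sinh x)|
      ≤ ‖Nφ‖ * 3 ^ n * Real.exp (Real.sinh x ^ 2 / 4) := by
    have hc : (0:ℝ) ≤ ‖Nφ‖ / (2^n * Real.sqrt n.factorial) := by positivity
    calc ‖Nφ‖ / (2^n * Real.sqrt n.factorial) * |hermiteH n (Real.sinh x)|
        ≤ ‖Nφ‖ / (2^n * Real.sqrt n.factorial)
          * (6 ^ n * Real.sqrt (n.factorial) * Real.exp (Real.sinh x ^ 2 / 4)) :=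
          mul_le_mul_of_nonneg_left hH hc
      _ = ‖Nφ‖ * 3 ^ n * Real.exp (Real.sinh x ^ 2 / 4) := by
          rw [show (6:ℝ)^n = 2^n * 3^n by rw [← mul_pow]; norm_num]
          field_simp
  calc ‖Nφ‖ / (2^n * Real.sqrt n.factorial) * |hermiteH n (Real.sinh x)|
      * Real.exp (-(Real.cosh x)^2)
      ≤ (‖Nφ‖ * 3 ^ n * Real.exp (Real.sinh x ^ 2 / 4)) * Real.exp (-(Real.cosh x)^2) :=
        mul_le_mul_of_nonneg_right hstep (Real.exp_nonneg _)
    _ = (‖Nφ‖ * 3 ^ n) * (Real.exp (Real.sinh x ^ 2 / 4) * Real.exp (-(Real.cosh x)^2)) := by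
        ring
    _ ≤ (‖Nφ‖ * 3 ^ n) * Real.exp (-(3/4) * x ^ 2) :=
        mul_le_mul_of_nonneg_left hexp (by positivity)

lemma psi_pointwise (Nψ : ℂ) (n : ℕ) (s : ℝ) :
    ‖2 * Nψ / (Real.sqrt n.factorial : ℂ) * (hermiteH n s : ℂ) * (Real.exp (-s^2/2) : ℂ)‖
      ≤ (2 * ‖Nψ‖ * 6 ^ n) * Real.exp (-(1/4) * s ^ 2) := by
  have hfac : (0:ℝ) < Real.sqrt n.factorial := Real.sqrt_pos.mpr (by positivity)
  have hnorm : ‖2 * Nψ / (Real.sqrt n.factorial : ℂ) * (hermiteH n s : ℂ)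
      * (Real.exp (-s^2/2) : ℂ)‖
      = 2 * ‖Nψ‖ / Real.sqrt n.factorial * |hermiteH n s| * Real.exp (-s^2/2) := by
    rw [norm_mul, norm_mul, norm_div, norm_mul]
    simp only [Complex.norm_real, Complex.norm_ofNat, Real.norm_eq_abs, Real.abs_exp,
      abs_of_pos hfac]
  rw [hnorm]
  have hH := hermiteH_bound n s
  have hc : (0:ℝ) ≤ 2 * ‖Nψ‖ / Real.sqrt n.factorial := by positivity
  calc 2 * ‖Nψ‖ / Real.sqrt n.factorial * |hermiteH n s| * Real.exp (-s^2/2)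
      ≤ 2 * ‖Nψ‖ / Real.sqrt n.factorial
        * (6 ^ n * Real.sqrt (n.factorial) * Real.exp (s ^ 2 / 4)) * Real.exp (-s^2/2) :=
        mul_le_mul_of_nonneg_right (mul_le_mul_of_nonneg_left hH hc) (Real.exp_nonneg _)
    _ = (2 * ‖Nψ‖ * 6 ^ n) * (Real.exp (s ^ 2 / 4) * Real.exp (-s^2/2)) := by
        field_simp
    _ = (2 * ‖Nψ‖ * 6 ^ n) * Real.exp (-(1/4) * s ^ 2) := by
        rw [← Real.exp_add]
        congr 1
        ring

noncomputable def Kφ : ℝ := (eLpNorm (fun x : ℝ => Real.exp (-(3/4) * x ^ 2)) 2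
  (volume : Measure ℝ)).toReal
noncomputable def Kψ : ℝ := (eLpNorm (fun x : ℝ => Real.exp (-(1/4) * x ^ 2)) 2
  (volume : Measure ℝ)).toReal

noncomputable def φform (Nφ : ℂ) (n : ℕ) : ℝ → ℂ := fun x =>
  Nφ / ((2:ℂ)^n * (Real.sqrt n.factorial : ℂ)) * (hermiteH n (Real.sinh x) : ℂ)
    * (Real.exp (-(Real.cosh x)^2) : ℂ)

noncomputable def ψform (Nψ : ℂ) (n : ℕ) : ℝ → ℂ := fun x =>
  2 * Nψ / (Real.sqrt n.factorial : ℂ) * (hermiteH n (Real.sinh x) : ℂ) * (Real.cosh x : ℂ)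

noncomputable def fψ (Nψ : ℂ) (n : ℕ) : ℝ → ℂ := fun s =>
  2 * Nψ / (Real.sqrt n.factorial : ℂ) * (hermiteH n s : ℂ) * (Real.exp (-s^2/2) : ℂ)

lemma φform_memℒp (Nφ : ℂ) (n : ℕ) :
    MemLp (φform Nφ n) 2 (volume : Measure ℝ) ∧
      (eLpNorm (φform Nφ n) 2 volume).toReal ≤ (‖Nφ‖ * 3 ^ n) * Kφ := by
  have hcont : Continuous (φform Nφ n) := by
    unfold φform
    refine ((continuous_const.mul ?_).mul ?_)
    · exact Complex.continuous_ofReal.comp ((hermiteH_continuous n).comp Real.continuous_sinh)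
    · exact Complex.continuous_ofReal.comp (Real.continuous_exp.comp (by continuity))
  exact bound_package hcont.aestronglyMeasurable (by norm_num : (0:ℝ) < 3/4)
    (by positivity) (phi_pointwise Nφ n)

lemma fψ_memℒp (Nψ : ℂ) (n : ℕ) :
    MemLp (fψ Nψ n) 2 (volume : Measure ℝ) ∧
      (eLpNorm (fψ Nψ n) 2 volume).toReal ≤ (2 * ‖Nψ‖ * 6 ^ n) * Kψ := by
  have hcont : Continuous (fψ Nψ n) := by
    unfold fψ
    refine ((continuous_const.mul ?_).mul ?_)
    · exact Complex.continuous_ofReal.comp (hermiteH_continuous n)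
    · exact Complex.continuous_ofReal.comp (Real.continuous_exp.comp (by continuity))
  exact bound_package hcont.aestronglyMeasurable (by norm_num : (0:ℝ) < 1/4)
    (by positivity) (psi_pointwise Nψ n)

lemma phi_integrable (Nφ : ℂ) (n : ℕ) (u : ℝ → ℂ) (hu : MemLp u 2 (volume : Measure ℝ)) :
    Integrable (fun x : ℝ => (starRingEnd ℂ) (φform Nφ n x) * u x) volume :=
  integrable_conj_mul _ _ (φform_memℒp Nφ n).1 hu

lemma phi_bound (Nφ : ℂ) (n : ℕ) (u : ℝ → ℂ) (hu : MemLp u 2 (volume : Measure ℝ)) :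
    ‖∫ x : ℝ, (starRingEnd ℂ) (φform Nφ n x) * u x‖
      ≤ ((‖Nφ‖ * Kφ) * 3 ^ n) * (eLpNorm u 2 volume).toReal := by
  refine (cs_bound _ _ (φform_memℒp Nφ n).1 hu).trans ?_
  have := mul_le_mul_of_nonneg_right (φform_memℒp Nφ n).2 (ENNReal.toReal_nonneg
    (a := eLpNorm u 2 volume))
  calc (eLpNorm (φform Nφ n) 2 volume).toReal * (eLpNorm u 2 volume).toReal
      ≤ ((‖Nφ‖ * 3 ^ n) * Kφ) * (eLpNorm u 2 volume).toReal := this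
    _ = ((‖Nφ‖ * Kφ) * 3 ^ n) * (eLpNorm u 2 volume).toReal := by ring

lemma psi_key (Nψ : ℂ) (n : ℕ) (u : ℝ → ℂ) (x : ℝ) :
    (starRingEnd ℂ) (ψform Nψ n x) * u x
      = Real.cosh x • ((starRingEnd ℂ) (fψ Nψ n (Real.sinh x)) * minusT u (Real.sinh x)) := by
  unfold ψform fψ minusT
  rw [Real.arsinh_sinh]
  have hcancel : ((Real.exp (-(Real.sinh x)^2/2) : ℝ) : ℂ)
      * ((Real.exp ((Real.sinh x)^2/2) : ℝ) : ℂ) = 1 := by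
    rw [← Complex.ofReal_mul, ← Real.exp_add,
      show -(Real.sinh x)^2/2 + (Real.sinh x)^2/2 = 0 by ring]
    simp
  simp only [map_mul, map_div₀, Complex.conj_ofReal, Complex.real_smul]
  ring_nf
  ring_nf at hcancel
  linear_combination (-(starRingEnd ℂ) 2 * (starRingEnd ℂ) Nψ / (Real.sqrt n.factorial : ℂ)
    * (hermiteH n (Real.sinh x) : ℂ) * (Real.cosh x : ℂ) * u x) * hcancel

lemma psi_eq (Nψ : ℂ) (n : ℕ) (u : ℝ → ℂ) :
    (fun x : ℝ => (starRingEnd ℂ) (ψform Nψ n x) * u x)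
      = fun x : ℝ => Real.cosh x
          • ((starRingEnd ℂ) (fψ Nψ n (Real.sinh x)) * minusT u (Real.sinh x)) :=
  funext (psi_key Nψ n u)

lemma psi_integral_eq (Nψ : ℂ) (n : ℕ) (u : ℝ → ℂ) :
    ∫ x : ℝ, (starRingEnd ℂ) (ψform Nψ n x) * u x
      = ∫ s : ℝ, (starRingEnd ℂ) (fψ Nψ n s) * minusT u s := by
  rw [show (fun x : ℝ => (starRingEnd ℂ) (ψform Nψ n x) * u x) = _ from psi_eq Nψ n u]
  exact cov (fun s => (starRingEnd ℂ) (fψ Nψ n s) * minusT u s)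

lemma psi_integrable (Nψ : ℂ) (n : ℕ) (u : ℝ → ℂ)
    (hu : MemLp (minusT u) 2 (volume : Measure ℝ)) :
    Integrable (fun x : ℝ => (starRingEnd ℂ) (ψform Nψ n x) * u x) volume := by
  rw [show (fun x : ℝ => (starRingEnd ℂ) (ψform Nψ n x) * u x) = _ from psi_eq Nψ n u]
  exact (cov_integrable (fun s => (starRingEnd ℂ) (fψ Nψ n s) * minusT u s)).mpr
    (integrable_conj_mul _ _ (fψ_memℒp Nψ n).1 hu)

lemma psi_bound (Nψ : ℂ) (n : ℕ) (u : ℝ → ℂ)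
    (hu : MemLp (minusT u) 2 (volume : Measure ℝ)) :
    ‖∫ x : ℝ, (starRingEnd ℂ) (ψform Nψ n x) * u x‖
      ≤ ((2 * ‖Nψ‖ * Kψ) * 6 ^ n) * (eLpNorm (minusT u) 2 volume).toReal := by
  rw [psi_integral_eq]
  refine (cs_bound _ _ (fψ_memℒp Nψ n).1 hu).trans ?_
  have := mul_le_mul_of_nonneg_right (fψ_memℒp Nψ n).2 (ENNReal.toReal_nonneg
    (a := eLpNorm (minusT u) 2 volume))
  calc (eLpNorm (fψ Nψ n) 2 volume).toReal * (eLpNorm (minusT u) 2 volume).toReal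
      ≤ ((2 * ‖Nψ‖ * 6 ^ n) * Kψ) * (eLpNorm (minusT u) 2 volume).toReal := this
    _ = ((2 * ‖Nψ‖ * Kψ) * 6 ^ n) * (eLpNorm (minusT u) 2 volume).toReal := by ring

lemma norm_sqrt_fac_complex (n : ℕ) : ‖((Real.sqrt n.factorial : ℝ) : ℂ)‖ = Real.sqrt n.factorial := by
  rw [Complex.norm_real, Real.norm_eq_abs, abs_of_pos (Real.sqrt_pos.mpr (by positivity))]

lemma series_bound (z : ℂ) (I : ℕ → ℂ) (b c : ℝ) (hb : 0 ≤ b) (hc : 0 ≤ c)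
    (hI : ∀ n, ‖I n‖ ≤ c * b ^ n) :
    Summable (fun n : ℕ => ((starRingEnd ℂ) z) ^ n / (Real.sqrt n.factorial : ℂ) * I n) ∧
    ‖∑' n : ℕ, ((starRingEnd ℂ) z) ^ n / (Real.sqrt n.factorial : ℂ) * I n‖
      ≤ (∑' n : ℕ, (b * ‖z‖) ^ n / Real.sqrt n.factorial) * c := by
  have hnorm : ∀ n : ℕ, ‖((starRingEnd ℂ) z) ^ n / (Real.sqrt n.factorial : ℂ) * I n‖
      ≤ (b * ‖z‖) ^ n / Real.sqrt n.factorial * c := by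
    intro n
    rw [norm_mul, norm_div, norm_pow, RCLike.norm_conj, norm_sqrt_fac_complex]
    have hfac : (0:ℝ) < Real.sqrt n.factorial := Real.sqrt_pos.mpr (by positivity)
    calc ‖z‖ ^ n / Real.sqrt n.factorial * ‖I n‖
        ≤ ‖z‖ ^ n / Real.sqrt n.factorial * (c * b ^ n) := by
          apply mul_le_mul_of_nonneg_left (hI n) (by positivity)
      _ = (b * ‖z‖) ^ n / Real.sqrt n.factorial * c := by
          rw [mul_pow]; ring
  have hmaj : Summable (fun n : ℕ => (b * ‖z‖) ^ n / Real.sqrt n.factorial * c) :=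
    (summable_pow_div_sqrt_factorial (by positivity)).mul_right c
  have hsumnorm : Summable (fun n : ℕ =>
      ‖((starRingEnd ℂ) z) ^ n / (Real.sqrt n.factorial : ℂ) * I n‖) :=
    Summable.of_nonneg_of_le (fun n => norm_nonneg _) hnorm hmaj
  refine ⟨Summable.of_norm hsumnorm, ?_⟩
  calc ‖∑' n : ℕ, ((starRingEnd ℂ) z) ^ n / (Real.sqrt n.factorial : ℂ) * I n‖
      ≤ ∑' n : ℕ, ‖((starRingEnd ℂ) z) ^ n / (Real.sqrt n.factorial : ℂ) * I n‖ :=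
        norm_tsum_le_tsum_norm hsumnorm
    _ ≤ ∑' n : ℕ, (b * ‖z‖) ^ n / Real.sqrt n.factorial * c :=
        Summable.tsum_le_tsum hnorm hsumnorm hmaj
    _ = (∑' n : ℕ, (b * ‖z‖) ^ n / Real.sqrt n.factorial) * c := tsum_mul_right

lemma norm_expfactor_le (z : ℂ) : ‖((Real.exp (-‖z‖ ^ 2 / 2) : ℝ) : ℂ)‖ ≤ 1 := by
  rw [Complex.norm_real, Real.norm_eq_abs, Real.abs_exp]
  exact Real.exp_le_one_iff.mpr (by nlinarith [sq_nonneg ‖z‖])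

lemma toReal_tendsto {u : ℕ → ENNReal} (h : Filter.Tendsto u Filter.atTop (nhds 0)) :
    Filter.Tendsto (fun k => (u k).toReal) Filter.atTop (nhds 0) := by
  have := (ENNReal.tendsto_toReal (by simp : (0:ENNReal) ≠ ⊤)).comp h
  rw [ENNReal.toReal_zero] at this
  exact this

end Stmt16Aux

/-- the weak bi-coherent state functionals `F_Φ(z)` and `F_Ψ(z)`
are `τ_{E_c}`-continuous linear functionals on `E_c`. -/
theorem stmt16 (Nφ Nψ : ℂ)
    (φ ψ : ℕ → ℝ → ℂ)
    (hφdef : ∀ n : ℕ, φ n = fun x =>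
      Nφ / ((2 : ℂ) ^ n * (Real.sqrt n.factorial : ℂ))
        * (hermiteH n (Real.sinh x) : ℂ) * (Real.exp (-(Real.cosh x) ^ 2) : ℂ))
    (hψdef : ∀ n : ℕ, ψ n = fun x =>
      2 * Nψ / (Real.sqrt n.factorial : ℂ)
        * (hermiteH n (Real.sinh x) : ℂ) * (Real.cosh x : ℂ))
    (FΦ FΨ : ℂ → (ℝ → ℂ) → ℂ)
    (hFΦ : ∀ (z : ℂ) (h : ℝ → ℂ), FΦ z h = (Real.exp (-‖z‖ ^ 2 / 2) : ℂ)
      * ∑' n : ℕ, ((starRingEnd ℂ) z) ^ n / (Real.sqrt n.factorial : ℂ)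
          * ∫ x : ℝ, (starRingEnd ℂ) (φ n x) * h x)
    (hFΨ : ∀ (z : ℂ) (h : ℝ → ℂ), FΨ z h = (Real.exp (-‖z‖ ^ 2 / 2) : ℂ)
      * ∑' n : ℕ, ((starRingEnd ℂ) z) ^ n / (Real.sqrt n.factorial : ℂ)
          * ∫ x : ℝ, (starRingEnd ℂ) (ψ n x) * h x) :
    ∀ (g : ℕ → ℝ → ℂ) (glim : ℝ → ℂ),
      (∀ k : ℕ, g k ∈ Ec) → glim ∈ Ec →
      Tendsto (fun k : ℕ => eLpNorm (g k - glim) 2 (volume : Measure ℝ)) atTop (nhds 0) →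
      Tendsto (fun k : ℕ => eLpNorm (minusT (g k) - minusT glim) 2 (volume : Measure ℝ))
        atTop (nhds 0) →
      (∀ z : ℂ, Tendsto (fun k : ℕ => FΦ z (g k)) atTop (nhds (FΦ z glim))) ∧
      (∀ z : ℂ, Tendsto (fun k : ℕ => FΨ z (g k)) atTop (nhds (FΨ z glim))) ∧
      (∀ k : ℕ, eLpNorm (plusT (g k) - plusT glim) 2 (volume : Measure ℝ)
        ≤ eLpNorm (minusT (g k) - minusT glim) 2 (volume : Measure ℝ)) ∧
      Tendsto (fun k : ℕ => eLpNorm (plusT (g k) - plusT glim) 2 (volume : Measure ℝ))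
        atTop (nhds 0) := by
  intro g glim hEc hglim hL2 hmL2
  have hφ : ∀ n : ℕ, φ n = Stmt16Aux.φform Nφ n := hφdef
  have hψ : ∀ n : ℕ, ψ n = Stmt16Aux.ψform Nψ n := hψdef
  have hmsub : ∀ k : ℕ, minusT (g k) - minusT glim = minusT (g k - glim) := by
    intro k; funext s; simp only [Pi.sub_apply, minusT]; ring
  have hd2 : ∀ k, MemLp (g k - glim) 2 (volume : Measure ℝ) := fun k => ((hEc k).1.sub hglim.1)
  have hdm : ∀ k, MemLp (minusT (g k - glim)) 2 (volume : Measure ℝ) := by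
    intro k; rw [← hmsub]; exact ((hEc k).2.sub hglim.2)
  have hKφ : (0:ℝ) ≤ Stmt16Aux.Kφ := ENNReal.toReal_nonneg
  have hKψ : (0:ℝ) ≤ Stmt16Aux.Kψ := ENNReal.toReal_nonneg
  -- the plusT vs minusT inequality
  have hplus : ∀ k : ℕ, eLpNorm (plusT (g k) - plusT glim) 2 (volume : Measure ℝ)
      ≤ eLpNorm (minusT (g k) - minusT glim) 2 (volume : Measure ℝ) := by
    intro k
    refine eLpNorm_mono fun s => ?_
    simp only [Pi.sub_apply, plusT, minusT]
    have heq : g k (Real.arsinh s) * (Real.exp (-s ^ 2 / 2) : ℂ) / (Real.sqrt (1 + s ^ 2) : ℂ)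
        - glim (Real.arsinh s) * (Real.exp (-s ^ 2 / 2) : ℂ) / (Real.sqrt (1 + s ^ 2) : ℂ)
        = (g k (Real.arsinh s) - glim (Real.arsinh s)) * (Real.exp (-s ^ 2 / 2) : ℂ)
          / (Real.sqrt (1 + s ^ 2) : ℂ) := by ring
    have heq2 : g k (Real.arsinh s) * (Real.exp (s ^ 2 / 2) : ℂ)
        - glim (Real.arsinh s) * (Real.exp (s ^ 2 / 2) : ℂ)
        = (g k (Real.arsinh s) - glim (Real.arsinh s)) * (Real.exp (s ^ 2 / 2) : ℂ) := by ring
    rw [heq, heq2, norm_div, norm_mul, norm_mul]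
    simp only [Complex.norm_real, Real.norm_eq_abs, Real.abs_exp]
    have h1 : Real.exp (-s^2/2) ≤ Real.exp (s^2/2) :=
      Real.exp_le_exp.mpr (by nlinarith [sq_nonneg s])
    have h2 : 1 ≤ |Real.sqrt (1+s^2)| := by
      rw [abs_of_nonneg (Real.sqrt_nonneg _)]
      exact Real.one_le_sqrt.mpr (by nlinarith [sq_nonneg s])
    set N := ‖g k (Real.arsinh s) - glim (Real.arsinh s)‖
    have hN : 0 ≤ N := norm_nonneg _
    calc N * Real.exp (-s^2/2) / |Real.sqrt (1+s^2)|
        ≤ N * Real.exp (-s^2/2) := div_le_self (by positivity) h2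
      _ ≤ N * Real.exp (s^2/2) := mul_le_mul_of_nonneg_left h1 hN
  refine ⟨?_, ?_, hplus, ?_⟩
  · -- Φ part
    intro z
    rw [tendsto_iff_norm_sub_tendsto_zero]
    set c : ℝ := ‖Nφ‖ * Stmt16Aux.Kφ with hcdef
    have hc : 0 ≤ c := mul_nonneg (norm_nonneg _) hKφ
    have hIu : ∀ (u : ℝ → ℂ), MemLp u 2 (volume : Measure ℝ) → ∀ n : ℕ,
        ‖∫ x : ℝ, (starRingEnd ℂ) (Stmt16Aux.φform Nφ n x) * u x‖
          ≤ (c * (eLpNorm u 2 volume).toReal) * 3 ^ n := by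
      intro u hu n
      calc ‖∫ x : ℝ, (starRingEnd ℂ) (Stmt16Aux.φform Nφ n x) * u x‖
          ≤ ((‖Nφ‖ * Stmt16Aux.Kφ) * 3 ^ n) * (eLpNorm u 2 volume).toReal :=
            Stmt16Aux.phi_bound Nφ n u hu
        _ = (c * (eLpNorm u 2 volume).toReal) * 3 ^ n := by rw [hcdef]; ring
    have hbound : ∀ k : ℕ, ‖FΦ z (g k) - FΦ z glim‖
        ≤ (∑' n : ℕ, (3 * ‖z‖) ^ n / Real.sqrt n.factorial)
          * (c * (eLpNorm (g k - glim) 2 volume).toReal) := by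
      intro k
      have hSu := (Stmt16Aux.series_bound z _ 3 _ (by norm_num)
        (mul_nonneg hc ENNReal.toReal_nonneg) (hIu (g k) (hEc k).1)).1
      have hSv := (Stmt16Aux.series_bound z _ 3 _ (by norm_num)
        (mul_nonneg hc ENNReal.toReal_nonneg) (hIu glim hglim.1)).1
      have hrew : FΦ z (g k) - FΦ z glim
          = ((Real.exp (-‖z‖ ^ 2 / 2) : ℝ) : ℂ)
            * ∑' n : ℕ, ((starRingEnd ℂ) z) ^ n / (Real.sqrt n.factorial : ℂ)
              * ∫ x : ℝ, (starRingEnd ℂ) (Stmt16Aux.φform Nφ n x) * (g k - glim) x := by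
        rw [hFΦ z (g k), hFΦ z glim]
        simp only [hφ]
        rw [← mul_sub, ← Summable.tsum_sub hSu hSv]
        congr 1
        apply tsum_congr
        intro n
        rw [← mul_sub, ← integral_sub (Stmt16Aux.phi_integrable Nφ n _ (hEc k).1)
          (Stmt16Aux.phi_integrable Nφ n _ hglim.1)]
        congr 1
        congr 1
        funext x
        simp only [Pi.sub_apply]
        ring
      rw [hrew, norm_mul]
      have hE := Stmt16Aux.norm_expfactor_le z
      have hS := (Stmt16Aux.series_bound z _ 3 _ (by norm_num)
        (mul_nonneg hc ENNReal.toReal_nonneg) (hIu (g k - glim) (hd2 k))).2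
      calc ‖((Real.exp (-‖z‖ ^ 2 / 2) : ℝ) : ℂ)‖ * ‖∑' n : ℕ, ((starRingEnd ℂ) z) ^ n
            / (Real.sqrt n.factorial : ℂ)
            * ∫ x : ℝ, (starRingEnd ℂ) (Stmt16Aux.φform Nφ n x) * (g k - glim) x‖
          ≤ 1 * ((∑' n : ℕ, (3 * ‖z‖) ^ n / Real.sqrt n.factorial)
            * (c * (eLpNorm (g k - glim) 2 volume).toReal)) :=
            mul_le_mul hE hS (norm_nonneg _) (by norm_num)
        _ = (∑' n : ℕ, (3 * ‖z‖) ^ n / Real.sqrt n.factorial)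
            * (c * (eLpNorm (g k - glim) 2 volume).toReal) := one_mul _
    refine squeeze_zero (fun k => norm_nonneg _) hbound ?_
    have hT := Stmt16Aux.toReal_tendsto hL2
    have := ((hT.const_mul c).const_mul (∑' n : ℕ, (3 * ‖z‖) ^ n / Real.sqrt n.factorial))
    simpa using this
  · -- Ψ part
    intro z
    rw [tendsto_iff_norm_sub_tendsto_zero]
    set c : ℝ := 2 * ‖Nψ‖ * Stmt16Aux.Kψ with hcdef
    have hc : 0 ≤ c := by
      rw [hcdef]
      have := norm_nonneg Nψ
      positivity
    have hIu : ∀ (u : ℝ → ℂ), MemLp (minusT u) 2 (volume : Measure ℝ) → ∀ n : ℕ,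
        ‖∫ x : ℝ, (starRingEnd ℂ) (Stmt16Aux.ψform Nψ n x) * u x‖
          ≤ (c * (eLpNorm (minusT u) 2 volume).toReal) * 6 ^ n := by
      intro u hu n
      calc ‖∫ x : ℝ, (starRingEnd ℂ) (Stmt16Aux.ψform Nψ n x) * u x‖
          ≤ ((2 * ‖Nψ‖ * Stmt16Aux.Kψ) * 6 ^ n) * (eLpNorm (minusT u) 2 volume).toReal :=
            Stmt16Aux.psi_bound Nψ n u hu
        _ = (c * (eLpNorm (minusT u) 2 volume).toReal) * 6 ^ n := by rw [hcdef]; ring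
    have hbound : ∀ k : ℕ, ‖FΨ z (g k) - FΨ z glim‖
        ≤ (∑' n : ℕ, (6 * ‖z‖) ^ n / Real.sqrt n.factorial)
          * (c * (eLpNorm (minusT (g k - glim)) 2 volume).toReal) := by
      intro k
      have hSu := (Stmt16Aux.series_bound z _ 6 _ (by norm_num)
        (mul_nonneg hc ENNReal.toReal_nonneg) (hIu (g k) (hEc k).2)).1
      have hSv := (Stmt16Aux.series_bound z _ 6 _ (by norm_num)
        (mul_nonneg hc ENNReal.toReal_nonneg) (hIu glim hglim.2)).1
      have hrew : FΨ z (g k) - FΨ z glim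
          = ((Real.exp (-‖z‖ ^ 2 / 2) : ℝ) : ℂ)
            * ∑' n : ℕ, ((starRingEnd ℂ) z) ^ n / (Real.sqrt n.factorial : ℂ)
              * ∫ x : ℝ, (starRingEnd ℂ) (Stmt16Aux.ψform Nψ n x) * (g k - glim) x := by
        rw [hFΨ z (g k), hFΨ z glim]
        simp only [hψ]
        rw [← mul_sub, ← Summable.tsum_sub hSu hSv]
        congr 1
        apply tsum_congr
        intro n
        rw [← mul_sub, ← integral_sub (Stmt16Aux.psi_integrable Nψ n _ (hEc k).2)
          (Stmt16Aux.psi_integrable Nψ n _ hglim.2)]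
        congr 1
        congr 1
        funext x
        simp only [Pi.sub_apply]
        ring
      rw [hrew, norm_mul]
      have hE := Stmt16Aux.norm_expfactor_le z
      have hS := (Stmt16Aux.series_bound z _ 6 _ (by norm_num)
        (mul_nonneg hc ENNReal.toReal_nonneg) (hIu (g k - glim) (hdm k))).2
      calc ‖((Real.exp (-‖z‖ ^ 2 / 2) : ℝ) : ℂ)‖ * ‖∑' n : ℕ, ((starRingEnd ℂ) z) ^ n
            / (Real.sqrt n.factorial : ℂ)
            * ∫ x : ℝ, (starRingEnd ℂ) (Stmt16Aux.ψform Nψ n x) * (g k - glim) x‖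
          ≤ 1 * ((∑' n : ℕ, (6 * ‖z‖) ^ n / Real.sqrt n.factorial)
            * (c * (eLpNorm (minusT (g k - glim)) 2 volume).toReal)) :=
            mul_le_mul hE hS (norm_nonneg _) (by norm_num)
        _ = (∑' n : ℕ, (6 * ‖z‖) ^ n / Real.sqrt n.factorial)
            * (c * (eLpNorm (minusT (g k - glim)) 2 volume).toReal) := one_mul _
    refine squeeze_zero (fun k => norm_nonneg _) hbound ?_
    have hmL2' : Tendsto (fun k : ℕ => eLpNorm (minusT (g k - glim)) 2 (volume : Measure ℝ))
        atTop (nhds 0) := by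
      have := hmL2
      simp only [hmsub] at this
      exact this
    have hT := Stmt16Aux.toReal_tendsto hmL2'
    have := ((hT.const_mul c).const_mul (∑' n : ℕ, (6 * ‖z‖) ^ n / Real.sqrt n.factorial))
    simpa using this
  · -- plusT tendsto
    exact tendsto_of_tendsto_of_tendsto_of_le_of_le tendsto_const_nhds hmL2
      (fun k => zero_le) hplus
end

section
/- Let N_φ ∈ ℂ and define φₙ(x) = (N_φ/(2ⁿ √(n!))) Hₙ(sinh x) e^{−cosh²x} for n ≥ 0. Then for every n ≥ 0 and every x ∈ ℝ: −(1/(2 cosh²x)) φₙ″(x) + (1/2)(sech²x − 2) tanh(x) φₙ′(x) − φₙ(x) = n φₙ(x). That is, each φₙ is an eigenfunction of the second-order differential operator H = −(1/(2 cosh²x)) d²/dx² + (1/2)(sech²x − 2) tanh(x) d/dx − 1 with eigenvalue n. -/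
/-- Polynomial version of the physicist's Hermite polynomials. -/
noncomputable def Hpoly : ℕ → Polynomial ℝ
  | 0 => 1
  | n + 1 => Polynomial.C 2 * Polynomial.X * Hpoly n - (Hpoly n).derivative

lemma hermiteH_eq (n : ℕ) : hermiteH n = fun y => (Hpoly n).eval y := by
  induction n with
  | zero => funext y; simp [hermiteH, Hpoly]
  | succ n ih =>
    funext y
    have hd : deriv (hermiteH n) y = ((Hpoly n).derivative).eval y := by
      rw [ih]; exact (Polynomial.hasDerivAt (Hpoly n) y).deriv
    simp [hermiteH, Hpoly, ih, hd]

lemma Hpoly_deriv : ∀ n : ℕ,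
    (Hpoly (n + 1)).derivative = Polynomial.C ((2 : ℝ) * (n + 1)) * Hpoly n := by
  intro n
  induction n with
  | zero =>
    have h1 : Hpoly 1 = Polynomial.C 2 * Polynomial.X * (1:Polynomial ℝ)
        - (1:Polynomial ℝ).derivative := rfl
    have h0 : Hpoly 0 = 1 := rfl
    rw [h1, h0]
    simp
  | succ n ih =>
    show (Polynomial.C 2 * Polynomial.X * Hpoly (n+1) - (Hpoly (n+1)).derivative).derivative = _
    rw [Polynomial.derivative_sub, Polynomial.derivative_mul, Polynomial.derivative_mul, ih,
      Polynomial.derivative_C, Polynomial.derivative_X, Polynomial.derivative_mul,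
      Polynomial.derivative_C]
    have h1 : Hpoly (n+1) = Polynomial.C 2 * Polynomial.X * Hpoly n - (Hpoly n).derivative := rfl
    rw [h1]
    push_cast
    simp only [map_mul, map_add, map_one, map_ofNat, Polynomial.C_eq_natCast]
    ring

lemma Hpoly_ode (n : ℕ) :
    ((Hpoly n).derivative).derivative
      = Polynomial.C 2 * Polynomial.X * (Hpoly n).derivative
        - Polynomial.C ((2 : ℝ) * n) * Hpoly n := by
  cases n with
  | zero => simp [Hpoly]
  | succ n =>
    rw [Hpoly_deriv n, Polynomial.derivative_mul, Polynomial.derivative_C]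
    have h1 : Hpoly (n+1) = Polynomial.C 2 * Polynomial.X * Hpoly n - (Hpoly n).derivative := rfl
    rw [h1]
    push_cast
    simp only [map_mul, map_add, map_one, map_ofNat, Polynomial.C_eq_natCast]
    ring

/-- derivative of `x ↦ p(sinh x) e^{−cosh²x}`. -/
lemma hasDerivAt_F (p : Polynomial ℝ) (x : ℝ) :
    HasDerivAt (fun x => p.eval (Real.sinh x) * Real.exp (-(Real.cosh x) ^ 2))
      (Real.cosh x *
        ((p.derivative - Polynomial.C 2 * Polynomial.X * p).eval (Real.sinh x)
          * Real.exp (-(Real.cosh x) ^ 2))) x := by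
  have h1 : HasDerivAt (fun x => p.eval (Real.sinh x))
      (p.derivative.eval (Real.sinh x) * Real.cosh x) x :=
    (Polynomial.hasDerivAt p (Real.sinh x)).comp x (Real.hasDerivAt_sinh x)
  have h2 : HasDerivAt (fun x : ℝ => -(Real.cosh x) ^ 2)
      (-(2 * Real.cosh x * Real.sinh x)) x := by
    have := ((Real.hasDerivAt_cosh x).fun_pow 2).fun_neg
    simpa using this
  have h3 : HasDerivAt (fun x => Real.exp (-(Real.cosh x) ^ 2))
      (Real.exp (-(Real.cosh x) ^ 2) * -(2 * Real.cosh x * Real.sinh x)) x := h2.exp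
  have h := h1.fun_mul h3
  refine h.congr_deriv ?_
  simp [Polynomial.eval_mul, Polynomial.eval_sub]
  ring

/-- each `φₙ(x) = (N_φ/(2ⁿ√(n!))) Hₙ(sinh x) e^{−cosh²x}` is an
eigenfunction, with eigenvalue `n`, of the non self-adjoint Hamiltonian
`H = −(1/(2cosh²x)) d²/dx² + (1/2)(sech²x − 2) tanh x d/dx − 1`. -/
theorem stmt19 (Nφ : ℂ)
    (φ : ℕ → ℝ → ℂ)
    (hφdef : ∀ n : ℕ, φ n = fun x =>
      Nφ / ((2 : ℂ) ^ n * (Real.sqrt n.factorial : ℂ))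
        * (hermiteH n (Real.sinh x) : ℂ) * (Real.exp (-(Real.cosh x) ^ 2) : ℂ)) :
    ∀ (n : ℕ) (x : ℝ),
      -((1 / (2 * (Real.cosh x) ^ 2) : ℝ) : ℂ) * deriv (deriv (φ n)) x
        + (((1 / 2 : ℝ) * ((1 / Real.cosh x) ^ 2 - 2) * Real.tanh x : ℝ) : ℂ)
          * deriv (φ n) x
        - φ n x
      = (n : ℂ) * φ n x := by
  intro n x
  set c : ℂ := Nφ / ((2 : ℂ) ^ n * (Real.sqrt n.factorial : ℂ)) with hc
  set p : Polynomial ℝ := Hpoly n with hp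
  set q : Polynomial ℝ := p.derivative - Polynomial.C 2 * Polynomial.X * p with hq
  have hφ : φ n = fun x =>
      c * ((p.eval (Real.sinh x) * Real.exp (-(Real.cosh x) ^ 2) : ℝ) : ℂ) := by
    rw [hφdef n]
    funext y
    rw [hermiteH_eq n]
    push_cast
    ring
  have hder1 : ∀ y : ℝ, HasDerivAt (φ n)
      (c * ((Real.cosh y * (q.eval (Real.sinh y) * Real.exp (-(Real.cosh y) ^ 2)) : ℝ) : ℂ)) y := by
    intro y
    rw [hφ]
    exact ((hasDerivAt_F p y).ofReal_comp).const_mul c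
  have hD1 : deriv (φ n) = fun y =>
      c * ((Real.cosh y * (q.eval (Real.sinh y) * Real.exp (-(Real.cosh y) ^ 2)) : ℝ) : ℂ) := by
    funext y; exact (hder1 y).deriv
  have hder2 : HasDerivAt (deriv (φ n))
      (c * ((Real.sinh x * (q.eval (Real.sinh x) * Real.exp (-(Real.cosh x) ^ 2))
        + Real.cosh x * (Real.cosh x *
            ((q.derivative - Polynomial.C 2 * Polynomial.X * q).eval (Real.sinh x)
              * Real.exp (-(Real.cosh x) ^ 2))) : ℝ) : ℂ)) x := by
    rw [hD1]
    have h : HasDerivAt (fun y => Real.cosh y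
        * (q.eval (Real.sinh y) * Real.exp (-(Real.cosh y) ^ 2)))
        (Real.sinh x * (q.eval (Real.sinh x) * Real.exp (-(Real.cosh x) ^ 2))
          + Real.cosh x * (Real.cosh x *
            ((q.derivative - Polynomial.C 2 * Polynomial.X * q).eval (Real.sinh x)
              * Real.exp (-(Real.cosh x) ^ 2)))) x :=
      (Real.hasDerivAt_cosh x).mul (hasDerivAt_F q x)
    exact (h.ofReal_comp).const_mul c
  rw [hder2.deriv, hD1, hφ]
  beta_reduce
  -- real abbreviations
  have hch0 : Real.cosh x ≠ 0 := ne_of_gt (Real.cosh_pos x)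
  have hE : Real.exp (-(Real.cosh x) ^ 2) ≠ 0 := Real.exp_ne_zero _
  set s := Real.sinh x with hs
  set ch := Real.cosh x with hch
  set E := Real.exp (-ch ^ 2) with hEdef
  set P := p.eval s with hP
  set Q := p.derivative.eval s with hQ
  have hqe : q.eval s = Q - 2 * s * P := by
    simp [hq, hP, hQ]
  have hode : (p.derivative).derivative.eval s = 2 * s * Q - 2 * n * P := by
    have h := Hpoly_ode n
    rw [← hp] at h
    rw [h]
    simp [hP, hQ]
  have hq2 : (q.derivative - Polynomial.C 2 * Polynomial.X * q).eval s
      = (2 * s * Q - 2 * n * P) - 2 * P - 2 * s * Q - 2 * s * (Q - 2 * s * P) := by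
    simp [hq, Polynomial.derivative_sub, Polynomial.derivative_mul, hode, hP, hQ]
    ring
  rw [hqe, hq2]
  have htanh : Real.tanh x = s / ch := Real.tanh_eq_sinh_div_cosh x
  rw [htanh]
  -- real identity
  have realkey : -(1 / (2 * ch ^ 2)) * (s * ((Q - 2 * s * P) * E)
        + ch * (ch * (((2 * s * Q - 2 * n * P) - 2 * P - 2 * s * Q
            - 2 * s * (Q - 2 * s * P)) * E)))
      + (1 / 2 * ((1 / ch) ^ 2 - 2) * (s / ch)) * (ch * ((Q - 2 * s * P) * E))
      - P * E = (n : ℝ) * (P * E) := by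
    field_simp
    ring
  have key2 := congrArg (fun t : ℝ => (t : ℂ)) realkey
  simp only [Complex.ofReal_mul, Complex.ofReal_add, Complex.ofReal_sub, Complex.ofReal_neg,
    Complex.ofReal_div, Complex.ofReal_pow, Complex.ofReal_one, Complex.ofReal_ofNat,
    Complex.ofReal_natCast] at key2 ⊢
  linear_combination c * key2
end
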